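/- Let L ≥ 2 be even and let A = {1, L, L+1}. Then for every n ∈ ℕ, W_A(n) = II if and only if n mod 2L ∈ {0, 2, 4, …, L−2}. -/

import Mathlib

/-- Standard NIM winner for the one-pile subtraction game with move set `A`:
`nimW A n = true` means Player I (the player to move) wins with `n` stones;
`nimW A n = false` means Player II wins.  (For `A` consisting of positive
integers this is exactly: Player I wins iff some `a ∈ A` with `a ≤ n` moves to
a Player-II-win position `n - a`.) -/
def nimW (A : Finset ℕ) : ℕ → Bool
  | n =>
    decide (((A.filter fun a => 0 < a ∧ a ≤ n).attach.filter (fun a =>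
      nimW A (n - a.1) = false)).Nonempty)
decreasing_by
  all_goals
    have h := a.2
    simp only [Finset.mem_filter] at h
    omega

lemma nimW_true_iff (A : Finset ℕ) (n : ℕ) :
    nimW A n = true ↔ ∃ a ∈ A, 0 < a ∧ a ≤ n ∧ nimW A (n - a) = false := by
  rw [nimW]
  rw [decide_eq_true_iff]
  simp [Finset.Nonempty, Finset.mem_filter]
  tauto

lemma mod_sub' (m a n : ℕ) (hm : 0 < m) (ha : a ≤ m) (han : a ≤ n) :
    (n - a) % m = if a ≤ n % m then n % m - a else n % m + m - a := by
  have h1 := Nat.div_add_mod n m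
  have h2 := Nat.mod_lt n hm
  split_ifs with h
  · have he : n - a = m * (n / m) + (n % m - a) := by omega
    rw [he, Nat.mul_add_mod]
    exact Nat.mod_eq_of_lt (by omega)
  · have hq : 1 ≤ n / m := by
      rcases Nat.eq_zero_or_pos (n / m) with h0 | h0
      · rw [h0] at h1; omega
      · exact h0
    obtain ⟨q, hqe⟩ : ∃ q, n / m = q + 1 := ⟨n / m - 1, by omega⟩
    rw [hqe, Nat.mul_add, Nat.mul_one] at h1
    have he : n - a = m * q + (n % m + m - a) := by omega
    rw [he, Nat.mul_add_mod]
    exact Nat.mod_eq_of_lt (by omega)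

/-- For even `L ≥ 2` and `A = {1, L, L+1}`,
Player II wins standard NIM with `n` stones iff
`n mod 2L ∈ {0, 2, 4, …, L-2}`. -/
theorem nim_one_L_Lsucc_even_winCondition (L : ℕ) (hL : 2 ≤ L) (hLeven : Even L)
    (n : ℕ) :
    nimW ({1, L, L + 1} : Finset ℕ) n = false ↔
      Even (n % (2 * L)) ∧ n % (2 * L) ≤ L - 2 := by
  induction n using Nat.strong_induction_on with
  | _ n ih =>
  obtain ⟨k, hk⟩ := hLeven
  have hm : 0 < 2 * L := by omega
  have hr := Nat.mod_lt n hm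
  have hle := Nat.mod_le n (2 * L)
  rw [← Bool.not_eq_true, nimW_true_iff]
  constructor
  · intro hno
    by_contra hP
    apply hno
    rw [Nat.even_iff] at hP
    by_cases hpar : n % (2 * L) % 2 = 1
    · by_cases hbig : n % (2 * L) ≤ L - 1
      · refine ⟨1, by simp, by omega, by omega, ?_⟩
        rw [ih (n - 1) (by omega), mod_sub' (2 * L) 1 n hm (by omega) (by omega),
          Nat.even_iff, if_pos (by omega)]
        omega
      · refine ⟨L + 1, by simp, by omega, by omega, ?_⟩
        rw [ih (n - (L + 1)) (by omega), mod_sub' (2 * L) (L + 1) n hm (by omega) (by omega),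
          Nat.even_iff, if_pos (by omega)]
        omega
    · refine ⟨L, by simp, by omega, by omega, ?_⟩
      rw [ih (n - L) (by omega), mod_sub' (2 * L) L n hm (by omega) (by omega),
        Nat.even_iff, if_pos (by omega)]
      omega
  · intro hP
    rw [Nat.even_iff] at hP
    rintro ⟨a, haA, hapos, han, hfalse⟩
    simp only [Finset.mem_insert, Finset.mem_singleton] at haA
    rw [ih (n - a) (by omega), Nat.even_iff,
      mod_sub' (2 * L) a n hm (by omega) han] at hfalse
    rcases haA with h | h | h <;> subst h <;> split_ifs at hfalse <;> omega
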